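/- There is a constant c > 0 such that for all real λ, μ, ν: Re ∑_{n≥0} ((−1)ⁿ μ/(π(n+1/2)) + ν)² / (π²(n+1/2)² + iλ) ≥ c·(μ² + ν²)/(1 + λ²). -/

import Mathlib

set_option maxHeartbeats 1000000

lemma re_div_aux (s x y : ℝ) :
    (((s:ℝ):ℂ)/((x:ℂ)+Complex.I*y)).re = s*x/(x^2+y^2) := by
  rw [Complex.div_re]
  simp [Complex.normSq_apply]
  ring

theorem stmt_5 :
    ∃ c : ℝ, 0 < c ∧ ∀ l m v : ℝ,
      c * (m ^ 2 + v ^ 2) / (1 + l ^ 2) ≤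
        (∑' n : ℕ,
          ((-1 : ℂ) ^ n * (m : ℂ) / ((Real.pi : ℂ) * ((n : ℂ) + 1 / 2)) + (v : ℂ)) ^ 2 /
            ((Real.pi : ℂ) ^ 2 * ((n : ℂ) + 1 / 2) ^ 2 + Complex.I * (l : ℂ))).re := by
  refine ⟨1/1000, by norm_num, fun l m v => ?_⟩
  have hp0 : (0:ℝ) < Real.pi := Real.pi_pos
  have hp1 : (3:ℝ) ≤ Real.pi := by linarith [Real.pi_gt_three]
  have hp2 : Real.pi ≤ 3.15 := by linarith [Real.pi_lt_d2]
  set p := Real.pi with hpdef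
  set g : ℕ → ℝ := fun n => (-1:ℝ)^n * m / (p*((n:ℝ)+1/2)) + v with hg
  set x : ℕ → ℝ := fun n => p^2*((n:ℝ)+1/2)^2 with hx
  have hxpos : ∀ n : ℕ, 0 < x n := by
    intro n; simp only [hx]; positivity
  have hterm : ∀ n : ℕ,
      ((-1 : ℂ) ^ n * (m : ℂ) / ((p : ℂ) * ((n : ℂ) + 1 / 2)) + (v : ℂ)) ^ 2 /
        ((p : ℂ) ^ 2 * ((n : ℂ) + 1 / 2) ^ 2 + Complex.I * (l : ℂ))
      = (((g n)^2 : ℝ) : ℂ) / (((x n : ℝ) : ℂ) + Complex.I * (l:ℂ)) := by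
    intro n
    simp only [hg, hx]
    push_cast
    ring
  have hre : ∀ n : ℕ,
      ((((g n)^2 : ℝ) : ℂ) / (((x n : ℝ) : ℂ) + Complex.I * (l:ℂ))).re
        = (g n)^2 * x n / ((x n)^2 + l^2) := fun n => re_div_aux _ _ _
  -- summability
  have h2 : Summable (fun n : ℕ => 1/((n:ℝ)+1)^2) := by
    have := (summable_nat_add_iff (f := fun n : ℕ => 1/(n:ℝ)^2) 1).2
      (Real.summable_one_div_nat_pow.mpr one_lt_two)
    simpa using this
  have hsum : Summable (fun n : ℕ => (((g n)^2 : ℝ) : ℂ) / (((x n : ℝ) : ℂ) + Complex.I * (l:ℂ))) := by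
    apply Summable.of_norm_bounded (g := fun n : ℕ => (|m|+|v|)^2 * (1/((n:ℝ)+1)^2)) (h2.mul_left _)
    intro n
    rw [norm_div]
    have hn0 : (0:ℝ) ≤ (n:ℝ) := Nat.cast_nonneg n
    have h9 : (9:ℝ) ≤ p^2 := by nlinarith
    have hd : ((n:ℝ)+1)^2 ≤ ‖((x n : ℝ) : ℂ) + Complex.I * (l:ℂ)‖ := by
      have h1 : ((n:ℝ)+1)^2 ≤ x n := by
        simp only [hx]
        nlinarith [sq_nonneg ((n:ℝ)+1/2), sq_nonneg ((n:ℝ)),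
          mul_le_mul_of_nonneg_right h9 (sq_nonneg ((n:ℝ)+1/2))]
      have h2' : x n = |((((x n : ℝ)) : ℂ) + Complex.I * (l:ℂ)).re| := by
        simp [abs_of_pos (hxpos n)]
      calc ((n:ℝ)+1)^2 ≤ x n := h1
        _ = |((((x n : ℝ)) : ℂ) + Complex.I * (l:ℂ)).re| := h2'
        _ ≤ ‖(((x n : ℝ)) : ℂ) + Complex.I * (l:ℂ)‖ := Complex.abs_re_le_norm _
    have hnum : ‖((((g n)^2:ℝ)) : ℂ)‖ = (g n)^2 := by
      rw [Complex.norm_real]; exact abs_of_nonneg (sq_nonneg _)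
    rw [hnum, mul_one_div]
    have hgb : (g n)^2 ≤ (|m|+|v|)^2 := by
      have hdpos : (0:ℝ) < p*((n:ℝ)+1/2) := by positivity
      have hden : (1:ℝ) ≤ p*((n:ℝ)+1/2) := by nlinarith
      have h1 : |(-1:ℝ)^n * m / (p*((n:ℝ)+1/2))| ≤ |m| := by
        rw [abs_div, abs_mul, abs_pow, abs_neg, abs_one, one_pow, one_mul,
          abs_of_pos hdpos, div_le_iff₀ hdpos]
        nlinarith [abs_nonneg m]
      have habs : |g n| ≤ |m| + |v| := by
        simp only [hg]
        calc |(-1:ℝ)^n * m / (p*((n:ℝ)+1/2)) + v|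
            ≤ |(-1:ℝ)^n * m / (p*((n:ℝ)+1/2))| + |v| := abs_add_le _ _
          _ ≤ |m| + |v| := add_le_add_left h1 _
      calc (g n)^2 = |g n|^2 := (sq_abs _).symm
        _ ≤ (|m|+|v|)^2 := pow_le_pow_left₀ (abs_nonneg _) habs 2
    exact div_le_div₀ (by positivity) hgb (by positivity) hd
  -- rewrite the goal
  rw [show (∑' n : ℕ,
          ((-1 : ℂ) ^ n * (m : ℂ) / ((p : ℂ) * ((n : ℂ) + 1 / 2)) + (v : ℂ)) ^ 2 /
            ((p : ℂ) ^ 2 * ((n : ℂ) + 1 / 2) ^ 2 + Complex.I * (l : ℂ)))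
      = ∑' n : ℕ, (((g n)^2 : ℝ) : ℂ) / (((x n : ℝ) : ℂ) + Complex.I * (l:ℂ))
    from tsum_congr hterm]
  rw [Complex.re_tsum hsum]
  have hre_nonneg : ∀ n : ℕ,
      0 ≤ ((((g n)^2 : ℝ) : ℂ) / (((x n : ℝ) : ℂ) + Complex.I * (l:ℂ))).re := by
    intro n
    rw [hre n]
    have := hxpos n
    positivity
  have hsumre : Summable (fun n : ℕ =>
      ((((g n)^2 : ℝ) : ℂ) / (((x n : ℝ) : ℂ) + Complex.I * (l:ℂ))).re) :=
    (Complex.hasSum_re hsum.hasSum).summable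
  have key := Summable.sum_le_tsum (Finset.range 2) (fun i _ => hre_nonneg i) hsumre
  refine le_trans ?_ key
  rw [Finset.sum_range_succ, Finset.sum_range_one, hre 0, hre 1]
  -- now pure real inequality
  have hpne : p ≠ 0 := ne_of_gt hp0
  have hg0 : g 0 = 2*m/p + v := by
    simp only [hg]; norm_num; field_simp
  have hg1 : g 1 = v - 2*m/(3*p) := by
    simp only [hg]; norm_num; field_simp; ring
  have hx0 : x 0 = p^2/4 := by simp only [hx]; norm_num; ring
  have hx1 : x 1 = 9*p^2/4 := by simp only [hx]; norm_num; ring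
  rw [hg0, hg1, hx0, hx1]
  have hD : (0:ℝ) < 1 + l^2 := by positivity
  have hpsq : p^2 ≤ 9.9225 := by nlinarith
  have h500a : (p^2/4) * (p^2/4) + l^2 ≤ 500*(1+l^2) := by nlinarith
  have h500b : (9*p^2/4) * (9*p^2/4) + l^2 ≤ 500*(1+l^2) := by nlinarith
  have step : ∀ s X : ℝ, 0 ≤ s → 0 < X → X*X + l^2 ≤ 500*(1+l^2) →
      s * X / (500*(1+l^2)) ≤ s * X / (X^2+l^2) := by
    intro s X hs hX hle
    apply div_le_div_of_nonneg_left (by positivity) (by positivity)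
    nlinarith
  have t0 := step ((2*m/p + v)^2) (p^2/4) (sq_nonneg _) (by positivity) h500a
  have t1 := step ((v - 2*m/(3*p))^2) (9*p^2/4) (sq_nonneg _) (by positivity) h500b
  have hK : (1/2)*(m^2+v^2) ≤ ((2*m+p*v)^2+(3*p*v-2*m)^2)/4 := by
    nlinarith [sq_nonneg (3*m-2*p*v), sq_nonneg v, sq_nonneg (p*v),
      mul_nonneg (mul_nonneg (sub_nonneg.2 hp1) (by linarith : (0:ℝ) ≤ p+3)) (sq_nonneg v)]
  have hmain : 1/1000 * (m^2+v^2) / (1+l^2) ≤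
      ((2*m/p + v)^2 * (p^2/4) + (v - 2*m/(3*p))^2 * (9*p^2/4)) / (500*(1+l^2)) := by
    rw [div_le_div_iff₀ hD (by positivity)]
    have hid : (2*m/p + v)^2 * (p^2/4) + (v - 2*m/(3*p))^2 * (9*p^2/4)
        = ((2*m+p*v)^2 + (3*p*v - 2*m)^2)/4 := by
      field_simp
      ring
    rw [hid]
    nlinarith [mul_le_mul_of_nonneg_right hK hD.le]
  calc 1/1000 * (m^2+v^2) / (1+l^2)
      ≤ ((2*m/p + v)^2 * (p^2/4) + (v - 2*m/(3*p))^2 * (9*p^2/4)) / (500*(1+l^2)) := hmain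
    _ = (2*m/p + v)^2 * (p^2/4) / (500*(1+l^2)) + (v - 2*m/(3*p))^2 * (9*p^2/4) / (500*(1+l^2)) := by ring
    _ ≤ _ := add_le_add t0 t1
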